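/- The set of potentials for a Markov operator T on a von Neumann algebra A is a norm-closed T-invariant cone in A₊: it is closed under addition and multiplication by nonnegative scalars, mapped into itself by T, and closed in the operator norm topology. -/

import Mathlib

open Filter Topology ContinuousLinearMap

namespace QMP

variable {H : Type*} [NormedAddCommGroup H] [InnerProductSpace ℂ H] [CompleteSpace H]

/-- `T` is a (quantum) Markov operator on the von Neumann algebra `A`:
a normal, unital, completely positive linear map leaving `A` invariant. -/
structure IsMarkov (A : VonNeumannAlgebra H) (T : (H →L[ℂ] H) → (H →L[ℂ] H)) : Prop where
  linear : IsLinearMap ℂ T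
  mapsSelf : ∀ x ∈ A, T x ∈ A
  unital : T 1 = 1
  cp : ∀ (n : ℕ) (a b : Fin n → (H →L[ℂ] H)),
    0 ≤ ∑ i : Fin n, ∑ j : Fin n, star (b i) * T (star (a i) * a j) * b j
  normal : ∀ {ι : Type} [Preorder ι] [IsDirected ι (· ≤ ·)] (f : ι → (H →L[ℂ] H))
    (y : H →L[ℂ] H), Monotone f → IsLUB (Set.range f) y →
      IsLUB (Set.range fun i => T (f i)) (T y)

/-- `y = ∑ₙ Tⁿ x` with convergence in the strong operator topology. -/
def SOTSum (T : (H →L[ℂ] H) → (H →L[ℂ] H)) (x y : H →L[ℂ] H) : Prop :=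
  ∀ η : H, Tendsto (fun N => ∑ n ∈ Finset.range N, (T^[n] x) η) atTop (𝓝 (y η))

/-- `x ∈ A₊` is `T`-summable: `∑ₙ Tⁿ x` converges strongly to an element of `A₊`. -/
def TSummable (A : VonNeumannAlgebra H) (T : (H →L[ℂ] H) → (H →L[ℂ] H))
    (x : H →L[ℂ] H) : Prop :=
  x ∈ A ∧ 0 ≤ x ∧ ∃ y, y ∈ A ∧ 0 ≤ y ∧ SOTSum T x y

/-- `y` is a potential for `T`: `y = ∑ₙ Tⁿ x` for some `x ∈ A₊`. -/
def IsPotential (A : VonNeumannAlgebra H) (T : (H →L[ℂ] H) → (H →L[ℂ] H))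
    (y : H →L[ℂ] H) : Prop :=
  y ∈ A ∧ 0 ≤ y ∧ ∃ x, x ∈ A ∧ 0 ≤ x ∧ SOTSum T x y

/-- `p` is an orthogonal projection belonging to `A`. -/
def IsProj (A : VonNeumannAlgebra H) (p : H →L[ℂ] H) : Prop :=
  p ∈ A ∧ IsSelfAdjoint p ∧ IsIdempotentElem p

/-- `p` is the support projection of the self-adjoint element `a`. -/
def IsSupport (A : VonNeumannAlgebra H) (a p : H →L[ℂ] H) : Prop :=
  IsProj A p ∧ a = p * a * p ∧ ∀ q, IsProj A q → a = q * a * q → p ≤ q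

/-- `s` is the supremum of the family of projections `q` in the projection lattice of `A`. -/
def IsProjSup (A : VonNeumannAlgebra H) {ι : Type*} (q : ι → (H →L[ℂ] H))
    (s : H →L[ℂ] H) : Prop :=
  IsProj A s ∧ (∀ i, q i ≤ s) ∧ ∀ r, IsProj A r → (∀ i, q i ≤ r) → s ≤ r

end QMP

open QMP

section Aux
namespace QMP

open Filter Topology ContinuousLinearMap RCLike

section Helpers
set_option synthInstance.maxHeartbeats 1000000
set_option maxHeartbeats 1000000

variable {H : Type*} [NormedAddCommGroup H] [InnerProductSpace ℂ H] [CompleteSpace H]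

local notation "⟪" x ", " y "⟫" => @inner ℂ _ _ x y

lemma nonneg_of_tendsto {f : ℕ → H →L[ℂ] H} {g : H →L[ℂ] H}
    (hf : ∀ᶠ n in atTop, 0 ≤ f n)
    (h : ∀ η : H, Tendsto (fun n => f n η) atTop (𝓝 (g η))) : 0 ≤ g := by
  rw [nonneg_iff_isPositive, isPositive_iff_complex]
  intro η
  have hc : Tendsto (fun n => ⟪f n η, η⟫) atTop (𝓝 ⟪g η, η⟫) :=
    (h η).inner tendsto_const_nhds
  have hev : ∀ᶠ n in atTop, ((re ⟪f n η, η⟫ : ℝ) : ℂ) = ⟪f n η, η⟫ ∧ 0 ≤ re ⟪f n η, η⟫ := by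
    filter_upwards [hf] with n hn
    exact ((isPositive_iff_complex (f n)).mp ((nonneg_iff_isPositive (f n)).mp hn)) η
  have hre : Tendsto (fun n => re ⟪f n η, η⟫) atTop (𝓝 (re ⟪g η, η⟫)) :=
    (RCLike.continuous_re.tendsto _).comp hc
  constructor
  · have h1 : Tendsto (fun n => ((re ⟪f n η, η⟫ : ℝ) : ℂ)) atTop (𝓝 ((re ⟪g η, η⟫ : ℝ) : ℂ)) :=
      (RCLike.continuous_ofReal.tendsto _).comp hre
    have h2 : Tendsto (fun n => ((re ⟪f n η, η⟫ : ℝ) : ℂ)) atTop (𝓝 ⟪g η, η⟫) :=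
      hc.congr' (by filter_upwards [hev] with n hn using hn.1.symm)
    exact tendsto_nhds_unique h1 h2
  · exact ge_of_tendsto hre (by filter_upwards [hev] with n hn using hn.2)

lemma norm_apply_sq_le {p : H →L[ℂ] H} (hp : 0 ≤ p) (η : H) :
    ‖p η‖ ^ 2 ≤ ‖p‖ * re ⟪p η, η⟫ := by
  have hsa : IsSelfAdjoint p := IsSelfAdjoint.of_nonneg hp
  set s := CFC.sqrt p with hs
  have hs0 : 0 ≤ s := CFC.sqrt_nonneg (a := p)
  have hss : s * s = p := CFC.sqrt_mul_sqrt_self p hp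
  have h1 : p ≤ algebraMap ℝ _ ‖p‖ := IsSelfAdjoint.le_algebraMap_norm_self hsa
  have h2 : star s * p * s ≤ star s * algebraMap ℝ _ ‖p‖ * s := star_left_conjugate_le_conjugate h1 s
  have hstar : star s = s := (IsSelfAdjoint.of_nonneg hs0).star_eq
  rw [hstar] at h2
  have h3 : s * p * s = p * p := by rw [← hss]; simp only [mul_assoc]
  have h4 : s * algebraMap ℝ _ ‖p‖ * s = ‖p‖ • p := by
    rw [Algebra.algebraMap_eq_smul_one]
    rw [mul_smul_comm, mul_one, smul_mul_assoc, hss]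
  rw [h3, h4] at h2
  have h5 := ((le_def _ _).mp h2).2 η
  simp only [reApplyInnerSelf, sub_apply, inner_sub_left, map_sub, smul_apply,
    mul_apply, sub_nonneg] at h5
  have h6 : re ⟪p (p η), η⟫ = ‖p η‖ ^ 2 := by
    have hadj := ContinuousLinearMap.adjoint_inner_left p η (p η)
    rw [hsa.adjoint_eq] at hadj
    rw [hadj, inner_self_eq_norm_sq]
  have h7 : re ⟪(‖p‖ • p) η, η⟫ = ‖p‖ * re ⟪p η, η⟫ := by
    rw [ContinuousLinearMap.smul_apply, RCLike.real_smul_eq_coe_smul (K := ℂ),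
      inner_smul_left, RCLike.conj_ofReal, RCLike.re_ofReal_mul]
  calc ‖p η‖ ^ 2 = re ⟪p (p η), η⟫ := h6.symm
    _ ≤ re ⟪(‖p‖ • p) η, η⟫ := by rw [ContinuousLinearMap.smul_apply]; exact h5
    _ = ‖p‖ * re ⟪p η, η⟫ := h7

lemma inner_le_of_le {a b : H →L[ℂ] H} (h : a ≤ b) (η : H) :
    re ⟪a η, η⟫ ≤ re ⟪b η, η⟫ := by
  have := ((le_def a b).mp h).2 η
  simp only [reApplyInnerSelf, sub_apply, inner_sub_left, map_sub] at this
  linarith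

lemma isLUB_of_tendsto {f : ℕ → H →L[ℂ] H} {y : H →L[ℂ] H} (hmono : Monotone f)
    (h : ∀ η : H, Tendsto (fun n => f n η) atTop (𝓝 (y η))) :
    IsLUB (Set.range f) y := by
  constructor
  · rintro z ⟨n, rfl⟩
    have h0 : 0 ≤ y - f n := by
      refine nonneg_of_tendsto (f := fun m => f m - f n) ?_ fun η => ?_
      · filter_upwards [eventually_ge_atTop n] with m hm using sub_nonneg.2 (hmono hm)
      · simpa only [sub_apply] using (h η).sub_const ((f n) η)
    exact sub_nonneg.1 h0
  · rintro b hb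
    have h0 : 0 ≤ b - y := by
      refine nonneg_of_tendsto (f := fun m => b - f m) ?_ fun η => ?_
      · exact Eventually.of_forall fun m => sub_nonneg.2 (hb ⟨m, rfl⟩)
      · simpa only [sub_apply] using (tendsto_const_nhds (x := b η)).sub (h η)
    exact sub_nonneg.1 h0

lemma tendsto_of_isLUB {f : ℕ → H →L[ℂ] H} {y : H →L[ℂ] H} (hmono : Monotone f)
    (hpos : ∀ n, 0 ≤ f n) (hlub : IsLUB (Set.range f) y) (η : H) :
    Tendsto (fun n => f n η) atTop (𝓝 (y η)) := by
  have hub : ∀ n, f n ≤ y := fun n => hlub.1 ⟨n, rfl⟩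
  have hnorm : ∀ n, ‖f n‖ ≤ ‖y‖ := fun n =>
    CStarAlgebra.norm_le_norm_of_nonneg_of_le (hpos n) (hub n)
  have hcauchy : ∀ ξ : H, CauchySeq fun n => f n ξ := by
    intro ξ
    set q : ℕ → ℝ := fun n => re ⟪f n ξ, ξ⟫ with hqdef
    have hqmono : Monotone q := fun m n hmn => inner_le_of_le (hmono hmn) ξ
    have hqbdd : BddAbove (Set.range q) := by
      refine ⟨re ⟪y ξ, ξ⟫, ?_⟩
      rintro r ⟨n, rfl⟩
      exact inner_le_of_le (hub n) ξ
    have hqc : CauchySeq q := (tendsto_atTop_ciSup hqmono hqbdd).cauchySeq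
    rw [Metric.cauchySeq_iff'] at hqc ⊢
    intro ε hε
    set C : ℝ := 2 * ‖y‖ + 1 with hCdef
    have hC : 0 < C := by positivity
    obtain ⟨N, hN⟩ := hqc (ε ^ 2 / C) (by positivity)
    refine ⟨N, fun n hn => ?_⟩
    have hp : 0 ≤ f n - f N := sub_nonneg.2 (hmono hn)
    have hcs := norm_apply_sq_le hp ξ
    have h1 : ‖f n - f N‖ ≤ C := by
      have h4 := norm_sub_le (f n) (f N)
      have h2 := hnorm n; have h3 := hnorm N
      rw [hCdef]; linarith
    have h2 : re ⟪(f n - f N) ξ, ξ⟫ = q n - q N := by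
      simp only [sub_apply, inner_sub_left, map_sub, hqdef]
    have h3 : q n - q N < ε ^ 2 / C := by
      have h5 := hN n hn
      rw [Real.dist_eq] at h5
      calc q n - q N ≤ |q n - q N| := le_abs_self _
        _ < ε ^ 2 / C := h5
    have h6 : 0 ≤ q n - q N := sub_nonneg.2 (hqmono hn)
    have h7 : ‖(f n - f N) ξ‖ ^ 2 < ε ^ 2 := by
      calc ‖(f n - f N) ξ‖ ^ 2 ≤ ‖f n - f N‖ * re ⟪(f n - f N) ξ, ξ⟫ := hcs
        _ ≤ C * (q n - q N) := by rw [h2]; exact mul_le_mul_of_nonneg_right h1 h6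
        _ < C * (ε ^ 2 / C) := by exact mul_lt_mul_of_pos_left h3 hC
        _ = ε ^ 2 := by field_simp
    have h8 : ‖(f n - f N) ξ‖ < ε := by
      refine lt_of_pow_lt_pow_left₀ 2 hε.le ?_
      simpa using h7
    rw [dist_eq_norm]
    simpa only [sub_apply] using h8
  choose g hg using fun ξ => cauchySeq_tendsto_of_complete (hcauchy ξ)
  have hadd : ∀ a b : H, g (a + b) = g a + g b := fun a b =>
    tendsto_nhds_unique (hg (a + b)) (by simpa only [map_add] using (hg a).add (hg b))
  have hsmul : ∀ (c : ℂ) (a : H), g (c • a) = c • g a := fun c a =>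
    tendsto_nhds_unique (hg (c • a)) (by simpa only [map_smul] using (hg a).const_smul c)
  have hbound : ∀ a : H, ‖g a‖ ≤ ‖y‖ * ‖a‖ := by
    intro a
    refine le_of_tendsto (hg a).norm (Eventually.of_forall fun n => ?_)
    calc ‖f n a‖ ≤ ‖f n‖ * ‖a‖ := (f n).le_opNorm a
      _ ≤ ‖y‖ * ‖a‖ := mul_le_mul_of_nonneg_right (hnorm n) (norm_nonneg a)
  let L : H →L[ℂ] H := LinearMap.mkContinuous ⟨⟨g, hadd⟩, hsmul⟩ ‖y‖ hbound
  have hgL : ∀ ξ : H, Tendsto (fun n => f n ξ) atTop (𝓝 (L ξ)) := hg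
  have hyL : y = L := by
    refine le_antisymm ?_ ?_
    · refine hlub.2 ?_
      rintro z ⟨n, rfl⟩
      have h0 : 0 ≤ L - f n := by
        refine nonneg_of_tendsto (f := fun m => f m - f n) ?_ fun ξ => ?_
        · filter_upwards [eventually_ge_atTop n] with m hm using sub_nonneg.2 (hmono hm)
        · simpa only [sub_apply] using (hgL ξ).sub_const ((f n) ξ)
      exact sub_nonneg.1 h0
    · have h0 : 0 ≤ y - L := by
        refine nonneg_of_tendsto (f := fun m => y - f m) ?_ fun ξ => ?_
        · exact Eventually.of_forall fun m => sub_nonneg.2 (hub m)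
        · simpa only [sub_apply] using (tendsto_const_nhds (x := y ξ)).sub (hgL ξ)
      exact sub_nonneg.1 h0
  rw [hyL]
  exact hgL η

lemma algebraMap_nonneg' {t : ℝ} (ht : 0 ≤ t) : 0 ≤ algebraMap ℝ (H →L[ℂ] H) t := by
  have hsa : ∀ s : ℝ, star (algebraMap ℝ (H →L[ℂ] H) s) = algebraMap ℝ (H →L[ℂ] H) s := by
    intro s
    rw [Algebra.algebraMap_eq_smul_one, star_smul, star_one, star_trivial]
  have h1 : algebraMap ℝ (H →L[ℂ] H) t
      = star (algebraMap ℝ (H →L[ℂ] H) (Real.sqrt t)) * algebraMap ℝ (H →L[ℂ] H) (Real.sqrt t) := by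
    rw [hsa, ← map_mul, Real.mul_self_sqrt ht]
  rw [h1]
  exact star_mul_self_nonneg _

variable {A : VonNeumannAlgebra H} {T : (H →L[ℂ] H) → (H →L[ℂ] H)}

lemma IsMarkov.pos (hT : IsMarkov A T) {a : H →L[ℂ] H} (ha : 0 ≤ a) : 0 ≤ T a := by
  rw [StarOrderedRing.nonneg_iff] at ha
  induction ha using AddSubmonoid.closure_induction with
  | mem z hz =>
    obtain ⟨s, rfl⟩ := hz
    have := hT.cp 1 (fun _ => s) (fun _ => 1)
    simpa using this
  | zero => simpa using le_of_eq (hT.linear.map_smul 0 0).symm |>.trans (by simp)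
  | add a b _ _ ha hb =>
    have : T (a + b) = T a + T b := hT.linear.map_add a b
    rw [this]
    exact add_nonneg ha hb

lemma IsMarkov.mono (hT : IsMarkov A T) {a b : H →L[ℂ] H} (hab : a ≤ b) : T a ≤ T b := by
  have h0 : 0 ≤ b - a := sub_nonneg.2 hab
  have := hT.pos h0
  rwa [hT.linear.map_sub, sub_nonneg] at this

lemma IsMarkov.map_algebraMap (hT : IsMarkov A T) (r : ℝ) :
    T (algebraMap ℝ (H →L[ℂ] H) r) = algebraMap ℝ (H →L[ℂ] H) r := by
  have h1 : algebraMap ℝ (H →L[ℂ] H) r = (r : ℂ) • (1 : H →L[ℂ] H) := by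
    rw [Algebra.algebraMap_eq_smul_one, ← algebraMap_smul ℂ r (1 : H →L[ℂ] H)]
    norm_num
  rw [h1, hT.linear.map_smul, hT.unital]

lemma IsMarkov.iter_pos (hT : IsMarkov A T) {a : H →L[ℂ] H} (ha : 0 ≤ a) (n : ℕ) :
    0 ≤ T^[n] a := by
  induction n with
  | zero => simpa using ha
  | succ n ih => rw [Function.iterate_succ_apply']; exact hT.pos ih

lemma IsMarkov.iter_mono (hT : IsMarkov A T) {a b : H →L[ℂ] H} (hab : a ≤ b) (n : ℕ) :
    T^[n] a ≤ T^[n] b := by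
  induction n with
  | zero => simpa using hab
  | succ n ih =>
    rw [Function.iterate_succ_apply', Function.iterate_succ_apply']
    exact hT.mono ih

lemma IsMarkov.iter_map_sub (hT : IsMarkov A T) (a b : H →L[ℂ] H) (n : ℕ) :
    T^[n] (a - b) = T^[n] a - T^[n] b := by
  induction n with
  | zero => simp
  | succ n ih => simp only [Function.iterate_succ_apply', ih, hT.linear.map_sub]

lemma IsMarkov.iter_map_add (hT : IsMarkov A T) (a b : H →L[ℂ] H) (n : ℕ) :
    T^[n] (a + b) = T^[n] a + T^[n] b := by
  induction n with
  | zero => simp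
  | succ n ih => simp only [Function.iterate_succ_apply', ih, hT.linear.map_add]

lemma IsMarkov.iter_map_smul (hT : IsMarkov A T) (c : ℂ) (a : H →L[ℂ] H) (n : ℕ) :
    T^[n] (c • a) = c • T^[n] a := by
  induction n with
  | zero => simp
  | succ n ih => simp only [Function.iterate_succ_apply', ih, hT.linear.map_smul]

lemma IsMarkov.iter_map_algebraMap (hT : IsMarkov A T) (r : ℝ) (n : ℕ) :
    T^[n] (algebraMap ℝ (H →L[ℂ] H) r) = algebraMap ℝ (H →L[ℂ] H) r := by
  induction n with
  | zero => simp
  | succ n ih => rw [Function.iterate_succ_apply', ih, hT.map_algebraMap]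

lemma IsMarkov.iter_norm_le (hT : IsMarkov A T) {a : H →L[ℂ] H} (ha : 0 ≤ a) (n : ℕ) :
    ‖T^[n] a‖ ≤ ‖a‖ := by
  have h1 : a ≤ algebraMap ℝ (H →L[ℂ] H) ‖a‖ :=
    IsSelfAdjoint.le_algebraMap_norm_self (IsSelfAdjoint.of_nonneg ha)
  have h2 : T^[n] a ≤ algebraMap ℝ (H →L[ℂ] H) ‖a‖ := by
    have := hT.iter_mono h1 n
    rwa [hT.iter_map_algebraMap] at this
  exact (CStarAlgebra.norm_le_iff_le_algebraMap _ (norm_nonneg a) (hT.iter_pos ha n)).mpr h2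

lemma IsMarkov.norm_map_le (hT : IsMarkov A T) {a : H →L[ℂ] H} (ha : IsSelfAdjoint a) :
    ‖T a‖ ≤ 3 * ‖a‖ := by
  set r : ℝ := ‖a‖ with hr
  have h1 : a ≤ algebraMap ℝ (H →L[ℂ] H) r := IsSelfAdjoint.le_algebraMap_norm_self ha
  have h2 : -(algebraMap ℝ (H →L[ℂ] H) r) ≤ a := IsSelfAdjoint.neg_algebraMap_norm_le_self ha
  set b : H →L[ℂ] H := a + algebraMap ℝ (H →L[ℂ] H) r with hb
  have hb0 : 0 ≤ b := by
    rw [hb, ← neg_add_cancel (algebraMap ℝ (H →L[ℂ] H) r)]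
    exact add_le_add_left h2 _
  have hble : b ≤ algebraMap ℝ (H →L[ℂ] H) (r + r) := by
    rw [hb, map_add]
    exact add_le_add_left h1 _
  have hTb0 : 0 ≤ T b := hT.pos hb0
  have hTble : T b ≤ algebraMap ℝ (H →L[ℂ] H) (r + r) := by
    have := hT.mono hble
    rwa [hT.map_algebraMap] at this
  have hTbnorm : ‖T b‖ ≤ r + r :=
    (CStarAlgebra.norm_le_iff_le_algebraMap _ (by positivity) hTb0).mpr hTble
  have hTa : T a = T b - algebraMap ℝ (H →L[ℂ] H) r := by
    rw [hb, hT.linear.map_add, hT.map_algebraMap, add_sub_cancel_right]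
  have halg : ‖algebraMap ℝ (H →L[ℂ] H) r‖ ≤ r := by
    rw [Algebra.algebraMap_eq_smul_one, norm_smul]
    calc ‖r‖ * ‖(1 : H →L[ℂ] H)‖ ≤ ‖r‖ * 1 := by
          refine mul_le_mul_of_nonneg_left ?_ (norm_nonneg r)
          exact ContinuousLinearMap.norm_id_le
      _ = r := by rw [mul_one, Real.norm_eq_abs, abs_of_nonneg (norm_nonneg a)]
  calc ‖T a‖ = ‖T b - algebraMap ℝ (H →L[ℂ] H) r‖ := by rw [hTa]
    _ ≤ ‖T b‖ + ‖algebraMap ℝ (H →L[ℂ] H) r‖ := norm_sub_le _ _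
    _ ≤ (r + r) + r := add_le_add hTbnorm halg
    _ = 3 * ‖a‖ := by ring

lemma IsMarkov.telescope (hT : IsMarkov A T) (y : H →L[ℂ] H) (N : ℕ) :
    ∑ n ∈ Finset.range N, T^[n] (y - T y) = y - T^[N] y := by
  induction N with
  | zero => simp
  | succ N ih =>
    rw [Finset.sum_range_succ, ih, hT.iter_map_sub]
    have h1 : T^[N] (T y) = T^[N + 1] y := (Function.iterate_succ_apply T N y).symm
    rw [h1]
    abel

lemma pot_iff (hT : IsMarkov A T) (y : H →L[ℂ] H) :
    IsPotential A T y ↔ y ∈ A ∧ 0 ≤ y ∧ 0 ≤ y - T y ∧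
      ∀ η : H, Tendsto (fun N => T^[N] y η) atTop (𝓝 0) := by
  constructor
  · rintro ⟨hyA, hy0, x, hxA, hx0, hsum⟩
    set S : ℕ → H →L[ℂ] H := fun N => ∑ n ∈ Finset.range N, T^[n] x with hSdef
    have hterm : ∀ n, 0 ≤ T^[n] x := hT.iter_pos hx0
    have hSpos : ∀ N, 0 ≤ S N := fun N => Finset.sum_nonneg fun i _ => hterm i
    have hSmono : Monotone S := by
      refine monotone_nat_of_le_succ fun N => ?_
      rw [hSdef]
      simp only [Finset.sum_range_succ]
      exact le_add_of_nonneg_right (hterm N)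
    have hSconv : ∀ η : H, Tendsto (fun N => S N η) atTop (𝓝 (y η)) := by
      intro η
      refine (hsum η).congr fun N => ?_
      rw [hSdef]
      exact (ContinuousLinearMap.sum_apply _ _ _).symm
    have hlub : IsLUB (Set.range S) y := isLUB_of_tendsto hSmono hSconv
    have hTlub : IsLUB (Set.range fun N => T (S N)) (T y) := hT.normal S y hSmono hlub
    have hTSmono : Monotone fun N => T (S N) := fun m n h => hT.mono (hSmono h)
    have hTSpos : ∀ N, 0 ≤ T (S N) := fun N => hT.pos (hSpos N)
    have hTconv : ∀ η : H, Tendsto (fun N => T (S N) η) atTop (𝓝 (T y η)) :=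
      tendsto_of_isLUB hTSmono hTSpos hTlub
    have hTS : ∀ N, T (S N) = S (N + 1) - x := by
      intro N
      have hlin : ∀ s : Finset ℕ, T (∑ n ∈ s, T^[n] x) = ∑ n ∈ s, T (T^[n] x) := by
        intro s
        exact map_sum (IsLinearMap.mk' T hT.linear) _ s
      rw [hSdef]
      simp only [hlin]
      have h1 : ∀ n : ℕ, T (T^[n] x) = T^[n + 1] x := fun n =>
        (Function.iterate_succ_apply' T n x).symm
      simp only [h1]
      rw [Finset.sum_range_succ']
      simp [add_sub_cancel_right]
    have hxy : x = y - T y := by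
      ext η
      have h1 := hTconv η
      have h2 : Tendsto (fun N => T (S N) η) atTop (𝓝 (y η - x η)) := by
        have h3 : Tendsto (fun N => S (N + 1) η) atTop (𝓝 (y η)) :=
          (hSconv η).comp (tendsto_add_atTop_nat 1)
        have h4 : Tendsto (fun N => S (N + 1) η - x η) atTop (𝓝 (y η - x η)) :=
          h3.sub_const (x η)
        refine h4.congr fun N => ?_
        rw [hTS N]
        simp [ContinuousLinearMap.sub_apply]
      have h5 := tendsto_nhds_unique h1 h2
      rw [ContinuousLinearMap.sub_apply]
      rw [h5]
      abel
    refine ⟨hyA, hy0, hxy ▸ hx0, ?_⟩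
    intro η
    have hS2 : ∀ N, S N = y - T^[N] y := by
      intro N
      rw [hSdef, hxy]
      exact hT.telescope y N
    have h6 : Tendsto (fun N => y η - S N η) atTop (𝓝 (y η - y η)) :=
      (tendsto_const_nhds (x := y η)).sub (hSconv η)
    rw [sub_self] at h6
    refine h6.congr fun N => ?_
    rw [hS2 N]
    simp [ContinuousLinearMap.sub_apply]
  · rintro ⟨hyA, hy0, hx0, hconv⟩
    refine ⟨hyA, hy0, y - T y, ?_, hx0, ?_⟩
    · exact sub_mem hyA (hT.mapsSelf y hyA)
    · intro η
      have h1 : ∀ N, ∑ n ∈ Finset.range N, (T^[n] (y - T y)) η = y η - T^[N] y η := by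
        intro N
        have h2 := congrArg (fun z : H →L[ℂ] H => z η) (hT.telescope y N)
        simpa [ContinuousLinearMap.sum_apply, ContinuousLinearMap.sub_apply] using h2
      have h3 : Tendsto (fun N => y η - T^[N] y η) atTop (𝓝 (y η - 0)) :=
        (tendsto_const_nhds (x := y η)).sub (hconv η)
      rw [sub_zero] at h3
      exact h3.congr fun N => (h1 N).symm

end Helpers

end QMP
end Aux

section MainAux
namespace QMP
open Filter Topology ContinuousLinearMap RCLike

section MainHelpers
set_option synthInstance.maxHeartbeats 1000000
set_option maxHeartbeats 1000000

variable {H : Type*} [NormedAddCommGroup H] [InnerProductSpace ℂ H] [CompleteSpace H]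

local notation "⟪" x ", " y "⟫" => @inner ℂ _ _ x y

lemma real_smul_eq (c : ℝ) (a : H →L[ℂ] H) : c • a = (c : ℂ) • a := by
  rw [← algebraMap_smul ℂ c a, Complex.coe_algebraMap]

lemma real_smul_vec_eq (c : ℝ) (v : H) : c • v = (c : ℂ) • v := by
  rw [← algebraMap_smul ℂ c v, Complex.coe_algebraMap]

lemma smul_nonneg'' {c : ℝ} (hc : 0 ≤ c) {a : H →L[ℂ] H} (ha : 0 ≤ a) :
    0 ≤ c • a := by
  set s := algebraMap ℝ (H →L[ℂ] H) (Real.sqrt c) with hs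
  have hstar : star s = s := by
    rw [hs, Algebra.algebraMap_eq_smul_one, star_smul, star_one, star_trivial]
  have h1 : 0 ≤ star s * a * s := star_left_conjugate_nonneg ha s
  have h2 : star s * a * s = c • a := by
    rw [hstar, hs, Algebra.algebraMap_eq_smul_one, smul_mul_assoc, one_mul,
      mul_smul_comm, mul_one, smul_smul, Real.mul_self_sqrt hc]
  rwa [h2] at h1

lemma smul_mem' {A : VonNeumannAlgebra H} (c : ℂ) {a : H →L[ℂ] H} (ha : a ∈ A) :
    c • a ∈ A := by
  have h1 : (c • (1 : H →L[ℂ] H)) * a = c • a := by rw [smul_mul_assoc, one_mul]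
  rw [← h1]
  refine mul_mem ?_ ha
  have h2 : c • (1 : H →L[ℂ] H) = algebraMap ℂ _ c := (Algebra.algebraMap_eq_smul_one c).symm
  rw [h2]
  exact A.toStarSubalgebra.algebraMap_mem c

end MainHelpers
end QMP
end MainAux


set_option synthInstance.maxHeartbeats 1000000
set_option maxHeartbeats 2000000

open Filter Topology ContinuousLinearMap RCLike in
/-- The set of potentials for a Markov operator is a norm-closed `T`-invariant cone in `A₊`:
closed under addition, nonnegative scalar multiples, invariant under `T`, and norm-closed. -/
theorem potentials_norm_closed_invariant_cone
    {H : Type*} [NormedAddCommGroup H] [InnerProductSpace ℂ H] [CompleteSpace H]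
    (A : VonNeumannAlgebra H) (T : (H →L[ℂ] H) → (H →L[ℂ] H)) (hT : IsMarkov A T) :
    (∀ y z, IsPotential A T y → IsPotential A T z → IsPotential A T (y + z)) ∧
    (∀ (c : ℝ), 0 ≤ c → ∀ y, IsPotential A T y → IsPotential A T (c • y)) ∧
    (∀ y, IsPotential A T y → IsPotential A T (T y)) ∧
    IsClosed {y : H →L[ℂ] H | IsPotential A T y} := by
  refine ⟨?_, ?_, ?_, ?_⟩
  · -- addition
    rintro y z ⟨hyA, hy0, x₁, hx₁A, hx₁0, hs₁⟩ ⟨hzA, hz0, x₂, hx₂A, hx₂0, hs₂⟩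
    refine ⟨add_mem hyA hzA, add_nonneg hy0 hz0, x₁ + x₂, add_mem hx₁A hx₂A,
      add_nonneg hx₁0 hx₂0, ?_⟩
    intro η
    have h1 : ∀ N, ∑ n ∈ Finset.range N, (T^[n] (x₁ + x₂)) η
        = (∑ n ∈ Finset.range N, (T^[n] x₁) η) + ∑ n ∈ Finset.range N, (T^[n] x₂) η := by
      intro N
      rw [← Finset.sum_add_distrib]
      refine Finset.sum_congr rfl fun n _ => ?_
      rw [hT.iter_map_add]
      simp [ContinuousLinearMap.add_apply]
    have h2 := (hs₁ η).add (hs₂ η)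
    rw [ContinuousLinearMap.add_apply]
    exact h2.congr fun N => (h1 N).symm
  · -- scalar multiples
    rintro c hc y ⟨hyA, hy0, x, hxA, hx0, hs⟩
    refine ⟨?_, QMP.smul_nonneg'' hc hy0, c • x, ?_, QMP.smul_nonneg'' hc hx0, ?_⟩
    · rw [QMP.real_smul_eq]; exact QMP.smul_mem' _ hyA
    · rw [QMP.real_smul_eq]; exact QMP.smul_mem' _ hxA
    · intro η
      have h1 : ∀ N, ∑ n ∈ Finset.range N, (T^[n] (c • x)) η
          = c • ∑ n ∈ Finset.range N, (T^[n] x) η := by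
        intro N
        rw [Finset.smul_sum]
        refine Finset.sum_congr rfl fun n _ => ?_
        rw [QMP.real_smul_eq, hT.iter_map_smul, ContinuousLinearMap.smul_apply,
          ← QMP.real_smul_vec_eq]
      have h2 := (hs η).const_smul c
      have h3 : (c • y) η = c • (y η) := by
        rw [QMP.real_smul_eq, ContinuousLinearMap.smul_apply, ← QMP.real_smul_vec_eq]
      rw [h3]
      exact h2.congr fun N => (h1 N).symm
  · -- T-invariance
    intro y hy
    rw [QMP.pot_iff hT] at hy ⊢
    obtain ⟨hyA, hy0, hd0, hconv⟩ := hy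
    refine ⟨hT.mapsSelf y hyA, hT.pos hy0, ?_, ?_⟩
    · have h1 : T y - T (T y) = T (y - T y) := (hT.linear.map_sub _ _).symm
      rw [h1]
      exact hT.pos hd0
    · intro η
      have h2 := (hconv η).comp (tendsto_add_atTop_nat 1)
      refine h2.congr fun N => ?_
      simp only [Function.comp_apply]
      rw [Function.iterate_succ_apply]
  · -- norm-closedness
    rw [← isSeqClosed_iff_isClosed]
    intro u y hu huy
    simp only [Set.mem_setOf_eq] at hu ⊢
    have hu' := fun k => (QMP.pot_iff hT (u k)).mp (hu k)
    rw [QMP.pot_iff hT]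
    have happly : ∀ (v : ℕ → H →L[ℂ] H) (w : H →L[ℂ] H), Tendsto v atTop (𝓝 w) →
        ∀ η : H, Tendsto (fun k => v k η) atTop (𝓝 (w η)) := by
      intro v w hv η
      have hc : Continuous fun z : H →L[ℂ] H => z η :=
        (ContinuousLinearMap.apply ℂ H η).continuous
      exact (hc.tendsto w).comp hv
    have hyA : y ∈ A := by
      rw [← SetLike.mem_coe, ← A.centralizer_centralizer]
      rw [Set.mem_centralizer_iff]
      intro z hz
      have h1 : ∀ k, u k * z = z * u k := fun k => hz (u k) ((hu' k).1)
      have h2 : Tendsto (fun k => u k * z) atTop (𝓝 (y * z)) := huy.mul tendsto_const_nhds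
      have h3 : Tendsto (fun k => u k * z) atTop (𝓝 (z * y)) := by
        refine (tendsto_const_nhds.mul huy).congr fun k => (h1 k).symm
      exact tendsto_nhds_unique h3 h2
    have hy0 : 0 ≤ y :=
      QMP.nonneg_of_tendsto (Eventually.of_forall fun k => (hu' k).2.1) (happly u y huy)
    have hTconv : Tendsto (fun k => T (u k)) atTop (𝓝 (T y)) := by
      rw [tendsto_iff_norm_sub_tendsto_zero]
      have hst : ∀ k, ‖T (u k) - T y‖ ≤ 3 * ‖u k - y‖ := by
        intro k
        have hsa : IsSelfAdjoint (u k - y) :=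
          (IsSelfAdjoint.of_nonneg (hu' k).2.1).sub (IsSelfAdjoint.of_nonneg hy0)
        have h4 := hT.norm_map_le hsa
        rwa [hT.linear.map_sub] at h4
      have h5 : Tendsto (fun k => ‖u k - y‖) atTop (𝓝 0) :=
        tendsto_iff_norm_sub_tendsto_zero.mp huy
      have h6 : Tendsto (fun k => 3 * ‖u k - y‖) atTop (𝓝 0) := by
        simpa using h5.const_mul 3
      exact squeeze_zero (fun k => norm_nonneg _) hst h6
    have hd0 : 0 ≤ y - T y := by
      refine QMP.nonneg_of_tendsto (f := fun k => u k - T (u k))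
        (Eventually.of_forall fun k => (hu' k).2.2.1) ?_
      exact happly _ _ (huy.sub hTconv)
    refine ⟨hyA, hy0, hd0, ?_⟩
    intro η
    have hr0 : ∀ N : ℕ, 0 ≤ re (inner ℂ (T^[N] y η) η : ℂ) := by
      intro N
      have h7 := QMP.inner_le_of_le (hT.iter_pos hy0 N) η
      simpa using h7
    have hrlim : Tendsto (fun N => re (inner ℂ (T^[N] y η) η : ℂ)) atTop (𝓝 0) := by
      rw [Metric.tendsto_atTop]
      intro ε' hε'
      set ε : ℝ := ε' / (2 * (‖η‖ ^ 2 + 1)) with hεdef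
      have hε : 0 < ε := by positivity
      obtain ⟨k₀, hk₀⟩ := Metric.tendsto_atTop.mp huy ε hε
      set k := k₀
      have hky : ‖y - u k‖ ≤ ε := by
        have h8 := hk₀ k le_rfl
        rw [dist_eq_norm, norm_sub_rev] at h8
        exact h8.le
      have hle : y ≤ u k + algebraMap ℝ (H →L[ℂ] H) ε := by
        have h1 : y - u k ≤ algebraMap ℝ (H →L[ℂ] H) ‖y - u k‖ :=
          IsSelfAdjoint.le_algebraMap_norm_self
            ((IsSelfAdjoint.of_nonneg hy0).sub (IsSelfAdjoint.of_nonneg (hu' k).2.1))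
        have h2 : algebraMap ℝ (H →L[ℂ] H) ‖y - u k‖ ≤ algebraMap ℝ (H →L[ℂ] H) ε := by
          rw [← sub_nonneg, ← map_sub]
          exact QMP.algebraMap_nonneg' (by linarith)
        have h3 := (h1.trans h2)
        rw [sub_le_iff_le_add] at h3
        rwa [add_comm] at h3
      have hiter : ∀ N, T^[N] y ≤ T^[N] (u k) + algebraMap ℝ (H →L[ℂ] H) ε := by
        intro N
        have h4 := hT.iter_mono hle N
        rwa [hT.iter_map_add, hT.iter_map_algebraMap] at h4
      have hform : ∀ N, re (inner ℂ (T^[N] y η) η : ℂ)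
          ≤ re (inner ℂ (T^[N] (u k) η) η : ℂ) + ε * ‖η‖ ^ 2 := by
        intro N
        have h5 := QMP.inner_le_of_le (hiter N) η
        have h6 : re (inner ℂ ((T^[N] (u k) + algebraMap ℝ (H →L[ℂ] H) ε) η) η : ℂ)
            = re (inner ℂ (T^[N] (u k) η) η : ℂ) + ε * ‖η‖ ^ 2 := by
          rw [ContinuousLinearMap.add_apply, inner_add_left, map_add]
          congr 1
          rw [Algebra.algebraMap_eq_smul_one, ContinuousLinearMap.smul_apply,
            ContinuousLinearMap.one_apply, RCLike.real_smul_eq_coe_smul (K := ℂ),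
            inner_smul_left, RCLike.conj_ofReal, RCLike.re_ofReal_mul,
            inner_self_eq_norm_sq]
        rw [← h6]
        exact h5
      have hconvk : Tendsto (fun N => re (inner ℂ (T^[N] (u k) η) η : ℂ)) atTop (𝓝 0) := by
        have h4 := (hu' k).2.2.2 η
        have h5 : Tendsto (fun N => (inner ℂ (T^[N] (u k) η) η : ℂ)) atTop
            (𝓝 (inner ℂ (0 : H) η)) := h4.inner tendsto_const_nhds
        rw [inner_zero_left] at h5
        have h6 := (RCLike.continuous_re.tendsto _).comp h5
        exact h6
      have hη2 : ε * ‖η‖ ^ 2 ≤ ε' / 2 := by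
        rw [hεdef]
        rw [div_mul_eq_mul_div, div_le_div_iff₀ (by positivity) (by norm_num)]
        nlinarith [sq_nonneg ‖η‖]
      obtain ⟨N₀, hN₀⟩ := Metric.tendsto_atTop.mp hconvk (ε' / 2 - ε * ‖η‖ ^ 2 + ε' / 2)
        (by linarith)
      refine ⟨N₀, fun N hN => ?_⟩
      have h8 := hN₀ N hN
      rw [Real.dist_eq, sub_zero] at h8
      have h9 := abs_lt.mp h8
      rw [Real.dist_eq, sub_zero, abs_of_nonneg (hr0 N)]
      have h10 := hform N
      linarith [h9.2]
    have hsq : ∀ N, ‖T^[N] y η‖ ^ 2 ≤ ‖y‖ * re (inner ℂ (T^[N] y η) η : ℂ) := by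
      intro N
      have h6 := QMP.norm_apply_sq_le (hT.iter_pos hy0 N) η
      have h7 := hT.iter_norm_le hy0 N
      calc ‖T^[N] y η‖ ^ 2 ≤ ‖T^[N] y‖ * re (inner ℂ (T^[N] y η) η : ℂ) := h6
        _ ≤ ‖y‖ * re (inner ℂ (T^[N] y η) η : ℂ) :=
          mul_le_mul_of_nonneg_right h7 (hr0 N)
    have hsq0 : Tendsto (fun N => ‖T^[N] y η‖ ^ 2) atTop (𝓝 0) := by
      have h8 : Tendsto (fun N => ‖y‖ * re (inner ℂ (T^[N] y η) η : ℂ)) atTop (𝓝 0) := by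
        simpa using hrlim.const_mul ‖y‖
      exact squeeze_zero (fun N => sq_nonneg _) hsq h8
    have hn0 : Tendsto (fun N => ‖T^[N] y η‖) atTop (𝓝 0) := by
      have h9 := hsq0.sqrt
      rw [Real.sqrt_zero] at h9
      refine h9.congr fun N => ?_
      exact Real.sqrt_sq (norm_nonneg _)
    exact tendsto_zero_iff_norm_tendsto_zero.mpr hn0
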